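/- Suppose h : ℝ → ℝ is twice continuously differentiable on (−∞, a), h'' ≥ 0 on (−∞, a), and h''(x)/e^{−λ₂x} → 0 as x → −∞ (with λ₂ > 0). Then for λ₁ > 0, the ratio (∫ₓᵃ e^{−λ₁(y−a)} h''(y) dy) / e^{−(λ₁+λ₂)(x−a)} tends to 0 as x → −∞. -/

import Mathlib

set_option maxHeartbeats 1000000


open Real Filter Set

theorem ratio_tendsto_zero_atBot
    (a lam1 lam2 : ℝ) (hlam1 : 0 < lam1) (hlam2 : 0 < lam2)
    (h h' h'' : ℝ → ℝ)
    (hd1 : ∀ x < a, HasDerivAt h (h' x) x)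
    (hd2 : ∀ x < a, HasDerivAt h' (h'' x) x)
    (hcont : ContinuousOn h'' (Set.Iio a))
    (hpos : ∀ x < a, 0 ≤ h'' x)
    (hlim : Tendsto (fun x => h'' x * Real.exp (lam2 * x)) atBot (nhds 0)) :
    Tendsto
      (fun x => (∫ y in x..a, Real.exp (-lam1 * (y - a)) * h'' y) /
        Real.exp (-(lam1 + lam2) * (x - a))) atBot (nhds 0) := by
  set μ := lam1 + lam2 with hμdef
  have hμ : 0 < μ := by positivity
  set g : ℝ → ℝ := fun y => Real.exp (-lam1 * (y - a)) with hg
  have hgcont : Continuous g := by rw [hg]; continuity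
  have hIIcont : ∀ x y : ℝ, x ≤ y → y < a →
      IntervalIntegrable h'' MeasureTheory.volume x y := by
    intro x y hxy hya
    apply ContinuousOn.intervalIntegrable
    apply hcont.mono
    rw [uIcc_of_le hxy]
    exact fun z hz => lt_of_le_of_lt hz.2 hya
  by_cases hint : ∃ x₀, x₀ < a ∧ IntervalIntegrable h'' MeasureTheory.volume x₀ a
  · obtain ⟨x₀, hx₀a, hx₀int⟩ := hint
    have hIIa : ∀ x ≤ x₀, IntervalIntegrable h'' MeasureTheory.volume x a := fun x hx =>
      (hIIcont x x₀ hx hx₀a).trans hx₀int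
    have hIIg : ∀ x y : ℝ, IntervalIntegrable h'' MeasureTheory.volume x y →
        IntervalIntegrable (fun y => g y * h'' y) MeasureTheory.volume x y := fun x y hII =>
      hII.continuousOn_mul hgcont.continuousOn
    rw [NormedAddCommGroup.tendsto_nhds_zero]
    intro ε hε
    set ε₁ := ε / 2 * μ * Real.exp (lam2 * a) with hε₁def
    have hε₁ : 0 < ε₁ := by positivity
    have hlim' := (NormedAddCommGroup.tendsto_nhds_zero.mp hlim) ε₁ hε₁
    rw [eventually_atBot] at hlim'
    obtain ⟨X', hX'⟩ := hlim'
    set X := min X' (min x₀ (a - 1)) with hXdef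
    have hXX' : X ≤ X' := min_le_left _ _
    have hXx₀ : X ≤ x₀ := le_trans (min_le_right _ _) (min_le_left _ _)
    have hXa : X < a := lt_of_le_of_lt (le_trans (min_le_right _ _) (min_le_right _ _))
      (by linarith)
    have hbound : ∀ y ≤ X, h'' y ≤ ε₁ * Real.exp (-lam2 * y) := by
      intro y hy
      have h1 := hX' y (le_trans hy hXX')
      have h2 : (0:ℝ) ≤ h'' y * Real.exp (lam2 * y) :=
        mul_nonneg (hpos y (lt_of_le_of_lt hy hXa)) (Real.exp_pos _).le
      rw [Real.norm_eq_abs, abs_of_nonneg h2] at h1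
      have h4 : Real.exp (-lam2 * y) = (Real.exp (lam2 * y))⁻¹ := by
        rw [← Real.exp_neg]; ring_nf
      rw [h4]
      calc h'' y = h'' y * Real.exp (lam2 * y) * (Real.exp (lam2 * y))⁻¹ := by
            rw [mul_assoc, mul_inv_cancel₀ (Real.exp_ne_zero _), mul_one]
        _ ≤ ε₁ * (Real.exp (lam2 * y))⁻¹ :=
            mul_le_mul_of_nonneg_right h1.le (by positivity)
    have hDtop : Tendsto (fun x => Real.exp (-μ * (x - a))) atBot atTop := by
      apply Real.tendsto_exp_atTop.comp
      have h1 : Tendsto (fun x : ℝ => a + -x) atBot atTop :=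
        tendsto_atTop_add_const_left atBot a tendsto_neg_atBot_atTop
      have h2 : Tendsto (fun x : ℝ => μ * (a + -x)) atBot atTop := h1.const_mul_atTop hμ
      exact h2.congr (fun x => by ring)
    set C := ∫ y in X..a, g y * h'' y with hCdef
    have hCtend : Tendsto (fun x => C / Real.exp (-μ * (x - a))) atBot (nhds 0) :=
      tendsto_const_nhds.div_atTop hDtop
    have hCev := (NormedAddCommGroup.tendsto_nhds_zero.mp hCtend) (ε / 2) (by positivity)
    filter_upwards [eventually_le_atBot X, hCev] with x hxX hxC
    have hxa : x < a := lt_of_le_of_lt hxX hXa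
    set D := Real.exp (-μ * (x - a)) with hDdef
    have hD : 0 < D := Real.exp_pos _
    have hIxX : IntervalIntegrable (fun y => g y * h'' y) MeasureTheory.volume x X :=
      hIIg x X (hIIcont x X hxX hXa)
    have hIXa : IntervalIntegrable (fun y => g y * h'' y) MeasureTheory.volume X a :=
      hIIg X a (hIIa X hXx₀)
    have hsplit : (∫ y in x..a, g y * h'' y) = (∫ y in x..X, g y * h'' y) + C :=
      (intervalIntegral.integral_add_adjacent_intervals hIxX hIXa).symm
    set A := ∫ y in x..X, g y * h'' y with hAdef
    have hA0 : 0 ≤ A := by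
      rw [hAdef]
      apply intervalIntegral.integral_nonneg hxX
      intro y hy
      have : (0:ℝ) ≤ h'' y := hpos y (lt_of_le_of_lt hy.2 hXa)
      have hgy : (0:ℝ) ≤ g y := by rw [hg]; positivity
      exact mul_nonneg hgy this
    have hrew : ∀ y : ℝ, g y * (ε₁ * Real.exp (-lam2 * y)) =
        ε₁ * Real.exp (lam1 * a) * Real.exp (-μ * y) := by
      intro y
      rw [hg]
      simp only
      rw [show (-lam1 * (y - a)) = lam1 * a + -lam1 * y by ring, Real.exp_add,
        show (-μ * y) = -lam1 * y + -lam2 * y by rw [hμdef]; ring, Real.exp_add]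
      ring
    have hAle : A ≤ ε₁ * Real.exp (lam1 * a) * (Real.exp (-μ * x) / μ) := by
      have hmono : A ≤ ∫ y in x..X, ε₁ * Real.exp (lam1 * a) * Real.exp (-μ * y) := by
        rw [hAdef]
        have hcexp : Continuous fun y : ℝ => Real.exp (-μ * y) :=
          Real.continuous_exp.comp (continuous_const.mul continuous_id)
        apply intervalIntegral.integral_mono_on hxX hIxX
        · exact (continuous_const.mul hcexp).intervalIntegrable _ _
        · intro y hy
          calc g y * h'' y ≤ g y * (ε₁ * Real.exp (-lam2 * y)) := by
                apply mul_le_mul_of_nonneg_left (hbound y hy.2)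
                rw [hg]; positivity
            _ = ε₁ * Real.exp (lam1 * a) * Real.exp (-μ * y) := hrew y
      refine hmono.trans ?_
      have hI : (∫ y in x..X, Real.exp (-μ * y)) =
          (Real.exp (-μ * x) - Real.exp (-μ * X)) / μ := by
        have hderiv : ∀ y ∈ uIcc x X, HasDerivAt (fun z => -(Real.exp (-μ * z) / μ))
            (Real.exp (-μ * y)) y := by
          intro y _
          have h1 : HasDerivAt (fun z : ℝ => -μ * z) (-μ) y := by
            simpa using (hasDerivAt_id y).const_mul (-μ)
          have h2 := ((h1.exp).div_const μ).neg
          have h3 : -(Real.exp (-μ * y) * -μ / μ) = Real.exp (-μ * y) := by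
            field_simp
          exact h3 ▸ h2
        have hcexp : Continuous fun y : ℝ => Real.exp (-μ * y) :=
          Real.continuous_exp.comp (continuous_const.mul continuous_id)
        rw [intervalIntegral.integral_eq_sub_of_hasDerivAt hderiv
          (hcexp.intervalIntegrable _ _)]
        ring
      rw [intervalIntegral.integral_const_mul, hI]
      have hle : Real.exp (-μ * x) - Real.exp (-μ * X) ≤ Real.exp (-μ * x) := by
        have := Real.exp_pos (-μ * X); linarith
      gcongr
    have hexpμ : Real.exp (lam2 * a) * Real.exp (lam1 * a) = Real.exp (μ * a) := by
      rw [← Real.exp_add]; congr 1; rw [hμdef]; ring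
    have hDeq : D = Real.exp (-μ * x) * Real.exp (μ * a) := by
      rw [hDdef, ← Real.exp_add]; congr 1; ring
    have key : ε₁ * Real.exp (lam1 * a) * (Real.exp (-μ * x) / μ) / D = ε / 2 := by
      rw [hε₁def, hDeq]
      have e1 := Real.exp_pos (-μ * x)
      have e2 := Real.exp_pos (μ * a)
      rw [← hexpμ]
      field_simp
    show ‖(∫ y in x..a, g y * h'' y) / D‖ < ε
    rw [hsplit, add_div]
    have h1 : ‖A / D‖ ≤ ε / 2 := by
      rw [Real.norm_eq_abs, abs_of_nonneg (div_nonneg hA0 hD.le)]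
      calc A / D ≤ ε₁ * Real.exp (lam1 * a) * (Real.exp (-μ * x) / μ) / D := by gcongr
        _ = ε / 2 := key
    calc ‖A / D + C / D‖ ≤ ‖A / D‖ + ‖C / D‖ := norm_add_le _ _
      _ < ε := by have := hxC; linarith [hxC]
  · push_neg at hint
    have hev : ∀ᶠ x in atBot,
        (∫ y in x..a, Real.exp (-lam1 * (y - a)) * h'' y) /
          Real.exp (-μ * (x - a)) = 0 := by
      filter_upwards [eventually_lt_atBot a] with x hxa
      have hnot : ¬ IntervalIntegrable (fun y => g y * h'' y) MeasureTheory.volume x a := by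
        intro hII
        apply hint x hxa
        have hc : ContinuousOn (fun y => Real.exp (lam1 * (y - a))) (uIcc x a) := by
          apply Continuous.continuousOn; continuity
        have hII2 := hII.continuousOn_mul hc
        have heq : (fun y => Real.exp (lam1 * (y - a)) * (g y * h'' y)) = h'' := by
          funext y
          rw [hg]
          simp only
          rw [← mul_assoc, ← Real.exp_add,
            show lam1 * (y - a) + -lam1 * (y - a) = 0 by ring, Real.exp_zero, one_mul]
        rwa [heq] at hII2
      show (∫ y in x..a, g y * h'' y) / Real.exp (-μ * (x - a)) = 0
      rw [intervalIntegral.integral_undef hnot, zero_div]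
    exact Tendsto.congr' (hev.mono fun x hx => hx.symm) tendsto_const_nhds
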